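/- Let ξ be a unit vector in ℝ⁷ and let u, v, w be vectors orthogonal to ξ. Then Ω_ξ = Re Ω_ξ + i Im Ω_ξ is a (3,0)-form with respect to the almost complex structure J_ξ(u) = u×ξ; concretely: φ₀(u×ξ, v×ξ, w) = −φ₀(u,v,w), and ψ₀(ξ, u×ξ, v, w) = φ₀(u,v,w) (i.e., Im Ω_ξ(J_ξ u, v, w) = Re Ω_ξ(u,v,w)). -/

import Mathlib

open scoped RealInnerProductSpace

noncomputable section

/-- `V7` is ℝ⁷ with its Euclidean inner product. -/
abbrev V7 : Type := EuclideanSpace ℝ (Fin 7)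

/-- Evaluation of the wedge product `eⁱ ∧ eʲ ∧ eᵏ` of dual basis 1-forms on three vectors. -/
def w3 (i j k : Fin 7) (u v w : V7) : ℝ :=
  Matrix.det !![u i, u j, u k; v i, v j, v k; w i, w j, w k]

/-- Evaluation of the wedge product `eⁱ ∧ eʲ ∧ eᵏ ∧ eˡ` on four vectors. -/
def w4 (i j k l : Fin 7) (u v w z : V7) : ℝ :=
  Matrix.det !![u i, u j, u k, u l; v i, v j, v k, v l;
                w i, w j, w k, w l; z i, z j, z k, z l]

/-- The standard G₂ 3-form φ₀ = e¹²³+e¹⁴⁵+e¹⁶⁷+e²⁴⁶−e²⁵⁷−e³⁴⁷−e³⁵⁶ (0-indexed). -/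
def phi0 (u v w : V7) : ℝ :=
  w3 0 1 2 u v w + w3 0 3 4 u v w + w3 0 5 6 u v w + w3 1 3 5 u v w
    - w3 1 4 6 u v w - w3 2 3 6 u v w - w3 2 4 5 u v w

/-- The 4-form ψ₀ = ∗φ₀ = e⁴⁵⁶⁷+e²³⁶⁷+e²³⁴⁵+e¹³⁵⁷−e¹³⁴⁶−e¹²⁵⁶−e¹²⁴⁷ (0-indexed). -/
def psi0 (u v w z : V7) : ℝ :=
  w4 3 4 5 6 u v w z + w4 1 2 5 6 u v w z + w4 1 2 3 4 u v w z + w4 0 2 4 6 u v w z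
    - w4 0 2 3 5 u v w z - w4 0 1 4 5 u v w z - w4 0 1 3 6 u v w z


lemma det3_expand (a b c d e f g h i : ℝ) :
    Matrix.det !![a,b,c; d,e,f; g,h,i] =
      a*e*i - a*f*h - b*d*i + b*f*g + c*d*h - c*e*g := by
  simp [Matrix.det_fin_three]

lemma det4_expand (a b c d e f g h i j k l m n o p : ℝ) :
    Matrix.det !![a,b,c,d; e,f,g,h; i,j,k,l; m,n,o,p] =
      a*(f*k*p - f*l*o - g*j*p + g*l*n + h*j*o - h*k*n)
      - b*(e*k*p - e*l*o - g*i*p + g*l*m + h*i*o - h*k*m)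
      + c*(e*j*p - e*l*n - f*i*p + f*l*m + h*i*n - h*j*m)
      - d*(e*j*o - e*k*n - f*i*o + f*k*m + g*i*n - g*j*m) := by
  rw [Matrix.det_succ_row_zero]
  simp [Fin.sum_univ_succ, Matrix.det_fin_three, Matrix.submatrix_apply,
    show Fin.succAbove (1:Fin 4) (2:Fin 3) = 3 from rfl,
    show Fin.succAbove (2:Fin 4) (2:Fin 3) = 3 from rfl,
    show Fin.succAbove (3:Fin 4) (2:Fin 3) = 2 from rfl]
  ring

set_option maxHeartbeats 4000000 in
set_option maxRecDepth 40000 in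
/-- For a unit vector ξ and u, v, w ⊥ ξ, Ω_ξ is a (3,0)-form with respect to
J_ξ(u) = u×ξ: φ₀(u×ξ, v×ξ, w) = −φ₀(u,v,w) and ψ₀(ξ, u×ξ, v, w) = φ₀(u,v,w),
i.e. Im Ω_ξ(J_ξ u, v, w) = Re Ω_ξ(u, v, w). -/
theorem Omega_is_three_zero_form
    (cross : V7 → V7 → V7)
    (hcross : ∀ u v w : V7, ⟪cross u v, w⟫ = phi0 u v w)
    (ξ : V7) (hξ : ‖ξ‖ = 1) (u v w : V7)
    (hu : ⟪u, ξ⟫ = (0 : ℝ)) (hv : ⟪v, ξ⟫ = (0 : ℝ)) (hw : ⟪w, ξ⟫ = (0 : ℝ)) :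
    phi0 (cross u ξ) (cross v ξ) w = -phi0 u v w ∧
      psi0 ξ (cross u ξ) v w = phi0 u v w := by
  have hξ2 : ξ 0 * ξ 0 + ξ 1 * ξ 1 + ξ 2 * ξ 2 + ξ 3 * ξ 3 + ξ 4 * ξ 4 + ξ 5 * ξ 5 + ξ 6 * ξ 6 = 1 := by
    have h : ⟪ξ, ξ⟫ = (1:ℝ) := by
      rw [real_inner_self_eq_norm_sq, hξ]; norm_num
    simp only [PiLp.inner_apply, Fin.sum_univ_seven, RCLike.inner_apply, conj_trivial] at h
    linarith
  have hu' : u 0 * ξ 0 + u 1 * ξ 1 + u 2 * ξ 2 + u 3 * ξ 3 + u 4 * ξ 4 + u 5 * ξ 5 + u 6 * ξ 6 = 0 := by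
    simp [PiLp.inner_apply, Fin.sum_univ_seven] at hu
    linarith
  have hv' : v 0 * ξ 0 + v 1 * ξ 1 + v 2 * ξ 2 + v 3 * ξ 3 + v 4 * ξ 4 + v 5 * ξ 5 + v 6 * ξ 6 = 0 := by
    simp [PiLp.inner_apply, Fin.sum_univ_seven] at hv
    linarith
  have hw' : w 0 * ξ 0 + w 1 * ξ 1 + w 2 * ξ 2 + w 3 * ξ 3 + w 4 * ξ 4 + w 5 * ξ 5 + w 6 * ξ 6 = 0 := by
    simp [PiLp.inner_apply, Fin.sum_univ_seven] at hw
    linarith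
  have hc0 : ∀ a : V7, cross a ξ 0 = a 1 * ξ 2 - a 2 * ξ 1 + a 3 * ξ 4 - a 4 * ξ 3 + a 5 * ξ 6 - a 6 * ξ 5 := by
    intro a
    have h := hcross a ξ (EuclideanSpace.single 0 1)
    simp [phi0, w3, Matrix.det_fin_three, EuclideanSpace.inner_single_right] at h
    linarith [h]
  have hc1 : ∀ a : V7, cross a ξ 1 = -a 0 * ξ 2 + a 2 * ξ 0 + a 3 * ξ 5 - a 4 * ξ 6 - a 5 * ξ 3 + a 6 * ξ 4 := by
    intro a
    have h := hcross a ξ (EuclideanSpace.single 1 1)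
    simp [phi0, w3, Matrix.det_fin_three, EuclideanSpace.inner_single_right] at h
    linarith [h]
  have hc2 : ∀ a : V7, cross a ξ 2 = a 0 * ξ 1 - a 1 * ξ 0 - a 3 * ξ 6 - a 4 * ξ 5 + a 5 * ξ 4 + a 6 * ξ 3 := by
    intro a
    have h := hcross a ξ (EuclideanSpace.single 2 1)
    simp [phi0, w3, Matrix.det_fin_three, EuclideanSpace.inner_single_right] at h
    linarith [h]
  have hc3 : ∀ a : V7, cross a ξ 3 = -a 0 * ξ 4 - a 1 * ξ 5 + a 2 * ξ 6 + a 4 * ξ 0 + a 5 * ξ 1 - a 6 * ξ 2 := by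
    intro a
    have h := hcross a ξ (EuclideanSpace.single 3 1)
    simp [phi0, w3, Matrix.det_fin_three, EuclideanSpace.inner_single_right] at h
    linarith [h]
  have hc4 : ∀ a : V7, cross a ξ 4 = a 0 * ξ 3 + a 1 * ξ 6 + a 2 * ξ 5 - a 3 * ξ 0 - a 5 * ξ 2 - a 6 * ξ 1 := by
    intro a
    have h := hcross a ξ (EuclideanSpace.single 4 1)
    simp [phi0, w3, Matrix.det_fin_three, EuclideanSpace.inner_single_right] at h
    linarith [h]
  have hc5 : ∀ a : V7, cross a ξ 5 = -a 0 * ξ 6 + a 1 * ξ 3 - a 2 * ξ 4 - a 3 * ξ 1 + a 4 * ξ 2 + a 6 * ξ 0 := by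
    intro a
    have h := hcross a ξ (EuclideanSpace.single 5 1)
    simp [phi0, w3, Matrix.det_fin_three, EuclideanSpace.inner_single_right] at h
    linarith [h]
  have hc6 : ∀ a : V7, cross a ξ 6 = a 0 * ξ 5 - a 1 * ξ 4 - a 2 * ξ 3 + a 3 * ξ 2 + a 4 * ξ 1 - a 5 * ξ 0 := by
    intro a
    have h := hcross a ξ (EuclideanSpace.single 6 1)
    simp [phi0, w3, Matrix.det_fin_three, EuclideanSpace.inner_single_right] at h
    linarith [h]
  constructor
  · simp only [phi0, w3, det3_expand, hc0, hc1, hc2, hc3, hc4, hc5, hc6]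
    linear_combination (-(u 0 * v 1 * w 2 - u 0 * v 2 * w 1 + u 0 * v 3 * w 4 - u 0 * v 4 * w 3 + u 0 * v 5 * w 6 - u 0 * v 6 * w 5 - u 1 * v 0 * w 2 + u 1 * v 2 * w 0 + u 1 * v 3 * w 5 - u 1 * v 4 * w 6 - u 1 * v 5 * w 3 + u 1 * v 6 * w 4 + u 2 * v 0 * w 1 - u 2 * v 1 * w 0 - u 2 * v 3 * w 6 - u 2 * v 4 * w 5 + u 2 * v 5 * w 4 + u 2 * v 6 * w 3 - u 3 * v 0 * w 4 - u 3 * v 1 * w 5 + u 3 * v 2 * w 6 + u 3 * v 4 * w 0 + u 3 * v 5 * w 1 - u 3 * v 6 * w 2 + u 4 * v 0 * w 3 + u 4 * v 1 * w 6 + u 4 * v 2 * w 5 - u 4 * v 3 * w 0 - u 4 * v 5 * w 2 - u 4 * v 6 * w 1 - u 5 * v 0 * w 6 + u 5 * v 1 * w 3 - u 5 * v 2 * w 4 - u 5 * v 3 * w 1 + u 5 * v 4 * w 2 + u 5 * v 6 * w 0 + u 6 * v 0 * w 5 - u 6 * v 1 * w 4 - u 6 * v 2 * w 3 + u 6 *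 v 3 * w 2 + u 6 * v 4 * w 1 - u 6 * v 5 * w 0)) * hξ2 + (v 0 * w 1 * ξ 2 - v 0 * w 2 * ξ 1 + v 0 * w 3 * ξ 4 - v 0 * w 4 * ξ 3 + v 0 * w 5 * ξ 6 - v 0 * w 6 * ξ 5 - v 1 * w 0 * ξ 2 + v 1 * w 2 * ξ 0 + v 1 * w 3 * ξ 5 - v 1 * w 4 * ξ 6 - v 1 * w 5 * ξ 3 + v 1 * w 6 * ξ 4 + v 2 * w 0 * ξ 1 - v 2 * w 1 * ξ 0 - v 2 * w 3 * ξ 6 - v 2 * w 4 * ξ 5 + v 2 * w 5 * ξ 4 + v 2 * w 6 * ξ 3 - v 3 * w 0 * ξ 4 - v 3 * w 1 * ξ 5 + v 3 * w 2 * ξ 6 + v 3 * w 4 * ξ 0 + v 3 * w 5 * ξ 1 - v 3 * w 6 * ξ 2 + v 4 * w 0 * ξ 3 + v 4 * w 1 * ξ 6 + v 4 * w 2 * ξ 5 - v 4 * w 3 * ξ 0 - v 4 * w 5 * ξ 2 - v 4 * w 6 * ξ 1 - v 5 * w 0 * ξ 6 + v 5 * w 1 * ξ 3 - v 5 * w 2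 * ξ 4 - v 5 * w 3 * ξ 1 + v 5 * w 4 * ξ 2 + v 5 * w 6 * ξ 0 + v 6 * w 0 * ξ 5 - v 6 * w 1 * ξ 4 - v 6 * w 2 * ξ 3 + v 6 * w 3 * ξ 2 + v 6 * w 4 * ξ 1 - v 6 * w 5 * ξ 0) * hu' + (-(u 0 * w 1 * ξ 2 - u 0 * w 2 * ξ 1 + u 0 * w 3 * ξ 4 - u 0 * w 4 * ξ 3 + u 0 * w 5 * ξ 6 - u 0 * w 6 * ξ 5 - u 1 * w 0 * ξ 2 + u 1 * w 2 * ξ 0 + u 1 * w 3 * ξ 5 - u 1 * w 4 * ξ 6 - u 1 * w 5 * ξ 3 + u 1 * w 6 * ξ 4 + u 2 * w 0 * ξ 1 - u 2 * w 1 * ξ 0 - u 2 * w 3 * ξ 6 - u 2 * w 4 * ξ 5 + u 2 * w 5 * ξ 4 + u 2 * w 6 * ξ 3 - u 3 * w 0 * ξ 4 - u 3 * w 1 * ξ 5 + u 3 * w 2 * ξ 6 + u 3 * w 4 * ξ 0 + u 3 * w 5 * ξ 1 - u 3 * w 6 * ξ 2 + u 4 * w 0 * ξ 3 + u 4 * w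 1 * ξ 6 + u 4 * w 2 * ξ 5 - u 4 * w 3 * ξ 0 - u 4 * w 5 * ξ 2 - u 4 * w 6 * ξ 1 - u 5 * w 0 * ξ 6 + u 5 * w 1 * ξ 3 - u 5 * w 2 * ξ 4 - u 5 * w 3 * ξ 1 + u 5 * w 4 * ξ 2 + u 5 * w 6 * ξ 0 + u 6 * w 0 * ξ 5 - u 6 * w 1 * ξ 4 - u 6 * w 2 * ξ 3 + u 6 * w 3 * ξ 2 + u 6 * w 4 * ξ 1 - u 6 * w 5 * ξ 0)) * hv' + (2 * (u 0 * v 1 * ξ 2 - u 0 * v 2 * ξ 1 + u 0 * v 3 * ξ 4 - u 0 * v 4 * ξ 3 + u 0 * v 5 * ξ 6 - u 0 * v 6 * ξ 5 - u 1 * v 0 * ξ 2 + u 1 * v 2 * ξ 0 + u 1 * v 3 * ξ 5 - u 1 * v 4 * ξ 6 - u 1 * v 5 * ξ 3 + u 1 * v 6 * ξ 4 + u 2 * v 0 * ξ 1 - u 2 * v 1 * ξ 0 - u 2 * v 3 * ξ 6 - u 2 * v 4 * ξ 5 + u 2 * v 5 * ξ 4 + u 2 * v 6 * ξ 3 - u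 3 * v 0 * ξ 4 - u 3 * v 1 * ξ 5 + u 3 * v 2 * ξ 6 + u 3 * v 4 * ξ 0 + u 3 * v 5 * ξ 1 - u 3 * v 6 * ξ 2 + u 4 * v 0 * ξ 3 + u 4 * v 1 * ξ 6 + u 4 * v 2 * ξ 5 - u 4 * v 3 * ξ 0 - u 4 * v 5 * ξ 2 - u 4 * v 6 * ξ 1 - u 5 * v 0 * ξ 6 + u 5 * v 1 * ξ 3 - u 5 * v 2 * ξ 4 - u 5 * v 3 * ξ 1 + u 5 * v 4 * ξ 2 + u 5 * v 6 * ξ 0 + u 6 * v 0 * ξ 5 - u 6 * v 1 * ξ 4 - u 6 * v 2 * ξ 3 + u 6 * v 3 * ξ 2 + u 6 * v 4 * ξ 1 - u 6 * v 5 * ξ 0)) * hw'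
  · simp only [phi0, psi0, w3, w4, det3_expand, det4_expand, hc0, hc1, hc2, hc3, hc4, hc5, hc6]
    linear_combination (u 0 * v 1 * w 2 - u 0 * v 2 * w 1 + u 0 * v 3 * w 4 - u 0 * v 4 * w 3 + u 0 * v 5 * w 6 - u 0 * v 6 * w 5 - u 1 * v 0 * w 2 + u 1 * v 2 * w 0 + u 1 * v 3 * w 5 - u 1 * v 4 * w 6 - u 1 * v 5 * w 3 + u 1 * v 6 * w 4 + u 2 * v 0 * w 1 - u 2 * v 1 * w 0 - u 2 * v 3 * w 6 - u 2 * v 4 * w 5 + u 2 * v 5 * w 4 + u 2 * v 6 * w 3 - u 3 * v 0 * w 4 - u 3 * v 1 * w 5 + u 3 * v 2 * w 6 + u 3 * v 4 * w 0 + u 3 * v 5 * w 1 - u 3 * v 6 * w 2 + u 4 * v 0 * w 3 + u 4 * v 1 * w 6 + u 4 * v 2 * w 5 - u 4 * v 3 * w 0 - u 4 * v 5 * w 2 - u 4 * v 6 * w 1 - u 5 * v 0 * w 6 + u 5 * v 1 * w 3 - u 5 * v 2 * w 4 - u 5 * v 3 * w 1 + u 5 * v 4 * w 2 + u 5 * v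 6 * w 0 + u 6 * v 0 * w 5 - u 6 * v 1 * w 4 - u 6 * v 2 * w 3 + u 6 * v 3 * w 2 + u 6 * v 4 * w 1 - u 6 * v 5 * w 0) * hξ2 + (-(v 0 * w 1 * ξ 2 - v 0 * w 2 * ξ 1 + v 0 * w 3 * ξ 4 - v 0 * w 4 * ξ 3 + v 0 * w 5 * ξ 6 - v 0 * w 6 * ξ 5 - v 1 * w 0 * ξ 2 + v 1 * w 2 * ξ 0 + v 1 * w 3 * ξ 5 - v 1 * w 4 * ξ 6 - v 1 * w 5 * ξ 3 + v 1 * w 6 * ξ 4 + v 2 * w 0 * ξ 1 - v 2 * w 1 * ξ 0 - v 2 * w 3 * ξ 6 - v 2 * w 4 * ξ 5 + v 2 * w 5 * ξ 4 + v 2 * w 6 * ξ 3 - v 3 * w 0 * ξ 4 - v 3 * w 1 * ξ 5 + v 3 * w 2 * ξ 6 + v 3 * w 4 * ξ 0 + v 3 * w 5 * ξ 1 - v 3 * w 6 * ξ 2 + v 4 * w 0 * ξ 3 + v 4 * w 1 * ξ 6 + v 4 * w 2 * ξ 5 - v 4 * w 3 * ξ 0 - v 4 * w 5 * ξ 2 -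 v 4 * w 6 * ξ 1 - v 5 * w 0 * ξ 6 + v 5 * w 1 * ξ 3 - v 5 * w 2 * ξ 4 - v 5 * w 3 * ξ 1 + v 5 * w 4 * ξ 2 + v 5 * w 6 * ξ 0 + v 6 * w 0 * ξ 5 - v 6 * w 1 * ξ 4 - v 6 * w 2 * ξ 3 + v 6 * w 3 * ξ 2 + v 6 * w 4 * ξ 1 - v 6 * w 5 * ξ 0)) * hu' + (u 0 * w 1 * ξ 2 - u 0 * w 2 * ξ 1 + u 0 * w 3 * ξ 4 - u 0 * w 4 * ξ 3 + u 0 * w 5 * ξ 6 - u 0 * w 6 * ξ 5 - u 1 * w 0 * ξ 2 + u 1 * w 2 * ξ 0 + u 1 * w 3 * ξ 5 - u 1 * w 4 * ξ 6 - u 1 * w 5 * ξ 3 + u 1 * w 6 * ξ 4 + u 2 * w 0 * ξ 1 - u 2 * w 1 * ξ 0 - u 2 * w 3 * ξ 6 - u 2 * w 4 * ξ 5 + u 2 * w 5 * ξ 4 + u 2 * w 6 * ξ 3 - u 3 * w 0 * ξ 4 - u 3 * w 1 * ξ 5 + u 3 * w 2 * ξ 6 + u 3 * w 4 * ξ 0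 + u 3 * w 5 * ξ 1 - u 3 * w 6 * ξ 2 + u 4 * w 0 * ξ 3 + u 4 * w 1 * ξ 6 + u 4 * w 2 * ξ 5 - u 4 * w 3 * ξ 0 - u 4 * w 5 * ξ 2 - u 4 * w 6 * ξ 1 - u 5 * w 0 * ξ 6 + u 5 * w 1 * ξ 3 - u 5 * w 2 * ξ 4 - u 5 * w 3 * ξ 1 + u 5 * w 4 * ξ 2 + u 5 * w 6 * ξ 0 + u 6 * w 0 * ξ 5 - u 6 * w 1 * ξ 4 - u 6 * w 2 * ξ 3 + u 6 * w 3 * ξ 2 + u 6 * w 4 * ξ 1 - u 6 * w 5 * ξ 0) * hv' + (-(u 0 * v 1 * ξ 2 - u 0 * v 2 * ξ 1 + u 0 * v 3 * ξ 4 - u 0 * v 4 * ξ 3 + u 0 * v 5 * ξ 6 - u 0 * v 6 * ξ 5 - u 1 * v 0 * ξ 2 + u 1 * v 2 * ξ 0 + u 1 * v 3 * ξ 5 - u 1 * v 4 * ξ 6 - u 1 * v 5 * ξ 3 + u 1 * v 6 * ξ 4 + u 2 * v 0 * ξ 1 - u 2 * v 1 * ξ 0 - u 2 * v 3 * ξ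 6 - u 2 * v 4 * ξ 5 + u 2 * v 5 * ξ 4 + u 2 * v 6 * ξ 3 - u 3 * v 0 * ξ 4 - u 3 * v 1 * ξ 5 + u 3 * v 2 * ξ 6 + u 3 * v 4 * ξ 0 + u 3 * v 5 * ξ 1 - u 3 * v 6 * ξ 2 + u 4 * v 0 * ξ 3 + u 4 * v 1 * ξ 6 + u 4 * v 2 * ξ 5 - u 4 * v 3 * ξ 0 - u 4 * v 5 * ξ 2 - u 4 * v 6 * ξ 1 - u 5 * v 0 * ξ 6 + u 5 * v 1 * ξ 3 - u 5 * v 2 * ξ 4 - u 5 * v 3 * ξ 1 + u 5 * v 4 * ξ 2 + u 5 * v 6 * ξ 0 + u 6 * v 0 * ξ 5 - u 6 * v 1 * ξ 4 - u 6 * v 2 * ξ 3 + u 6 * v 3 * ξ 2 + u 6 * v 4 * ξ 1 - u 6 * v 5 * ξ 0)) * hw'
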